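/- Let φ*(x) be defined by φ*(0) = M(μ), φ*(x) = x(b(x) - μ) - M(b(x)) + M(μ) for 0 < x ≤ ρ_c, and φ*(x) = +∞ otherwise. Then φ* is the Legendre–Fenchel transform of φ(t) = M(μ+t) - M(μ) for t ≤ -μ, φ(t) = +∞ for t > -μ; that is, φ*(x) = sup_{t ∈ ℝ} (tx - φ(t)) for all x ≥ 0 with x ≤ ρ_c. -/
import Mathlib


open Filter MeasureTheory Topology

/-- The rate function `φ*` is the Legendre–Fenchel transform of
`φ(t) = M(μ+t) - M(μ)` (with `φ(t) = +∞` for `t > -μ`, so the supremum runs over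
`t ≤ -μ`): for `0 < x ≤ ρ_c`, `x(b(x) - μ) - M(b(x)) + M(μ) = sup_{t ≤ -μ} (tx - φ(t))`,
and for `x = 0`, `M(μ) = sup_{t ≤ -μ} (-φ(t))`. -/
theorem stmt17 (d : ℕ) (hd : 3 ≤ d) (β μ : ℝ) (hβ : 0 < β) (hμ : μ < 0)
    (p : ℝ → ℝ) (hpos : ∀ t > (0:ℝ), 0 < p t)
    (hsum : Summable fun j : ℕ => p (β * ((j:ℝ)+1)))
    (ρfun Mfun : ℝ → ℝ)
    (hρdef : ρfun = fun ν => β * ∑' j : ℕ, Real.exp (β * ν * ((j:ℝ)+1)) * p (β * ((j:ℝ)+1)))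
    (hMdef : Mfun = fun ν =>
      ∑' j : ℕ, (Real.exp (β * ν * ((j:ℝ)+1)) / ((j:ℝ)+1)) * p (β * ((j:ℝ)+1)))
    (ρc : ℝ) (hρc : ρc = ρfun 0)
    (b : ℝ → ℝ) (hb : ∀ x : ℝ, 0 < x → x ≤ ρc → b x ≤ 0 ∧ ρfun (b x) = x) :
    (∀ x : ℝ, 0 < x → x ≤ ρc →
      x * (b x - μ) - Mfun (b x) + Mfun μ
        = ⨆ t : Set.Iic (-μ), ((t:ℝ) * x - (Mfun (μ + (t:ℝ)) - Mfun μ)))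
    ∧ Mfun μ = ⨆ t : Set.Iic (-μ), (0 - (Mfun (μ + (t:ℝ)) - Mfun μ)) := by
  haveI hne : Nonempty (Set.Iic (-μ)) := ⟨⟨-μ, Set.mem_Iic.mpr le_rfl⟩⟩
  set a : ℕ → ℝ := fun j => p (β * ((j:ℝ)+1)) with ha_def
  have hapos : ∀ j : ℕ, 0 < a j := fun j => hpos _ (by positivity)
  have hexple : ∀ (ν : ℝ), ν ≤ 0 → ∀ j : ℕ, Real.exp (β * ν * ((j:ℝ)+1)) ≤ 1 := by
    intro ν hν j
    rw [Real.exp_le_one_iff]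
    have hj : (0:ℝ) ≤ (j:ℝ)+1 := by positivity
    nlinarith [mul_nonneg (mul_nonneg hβ.le (neg_nonneg.mpr hν)) hj]
  have hS1 : ∀ (ν : ℝ), ν ≤ 0 →
      Summable (fun j : ℕ => Real.exp (β * ν * ((j:ℝ)+1)) * a j) := by
    intro ν hν
    apply Summable.of_nonneg_of_le (fun j => (mul_pos (Real.exp_pos _) (hapos j)).le)
      (fun j => ?_) hsum
    calc Real.exp (β * ν * ((j:ℝ)+1)) * a j ≤ 1 * a j :=
          mul_le_mul_of_nonneg_right (hexple ν hν j) (hapos j).le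
      _ = a j := one_mul _
  have hS2 : ∀ (ν : ℝ), ν ≤ 0 →
      Summable (fun j : ℕ => (Real.exp (β * ν * ((j:ℝ)+1)) / ((j:ℝ)+1)) * a j) := by
    intro ν hν
    apply Summable.of_nonneg_of_le (fun j => ?_) (fun j => ?_) hsum
    · have hj : (0:ℝ) < (j:ℝ)+1 := by positivity
      exact mul_nonneg (div_nonneg (Real.exp_pos _).le hj.le) (hapos j).le
    · have hj : (1:ℝ) ≤ (j:ℝ)+1 := by
        have := Nat.cast_nonneg (α := ℝ) j
        linarith
      have h1 : Real.exp (β * ν * ((j:ℝ)+1)) / ((j:ℝ)+1) ≤ 1 := by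
        rw [div_le_one (by positivity)]
        exact le_trans (hexple ν hν j) hj
      calc (Real.exp (β * ν * ((j:ℝ)+1)) / ((j:ℝ)+1)) * a j ≤ 1 * a j :=
            mul_le_mul_of_nonneg_right h1 (hapos j).le
        _ = a j := one_mul _
  -- key convexity inequality
  have key : ∀ (ν b0 : ℝ), ν ≤ 0 → b0 ≤ 0 →
      (ν - b0) * (β * ∑' j : ℕ, Real.exp (β * b0 * ((j:ℝ)+1)) * a j)
        ≤ (∑' j : ℕ, (Real.exp (β * ν * ((j:ℝ)+1)) / ((j:ℝ)+1)) * a j)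
          - ∑' j : ℕ, (Real.exp (β * b0 * ((j:ℝ)+1)) / ((j:ℝ)+1)) * a j := by
    intro ν b0 hν hb0
    rw [← mul_assoc, ← tsum_mul_left, ← Summable.tsum_sub (hS2 ν hν) (hS2 b0 hb0)]
    apply Summable.tsum_le_tsum _ (((hS1 b0 hb0).mul_left _)) ((hS2 ν hν).sub (hS2 b0 hb0))
    intro j
    set A := β * ν * ((j:ℝ)+1) with hA
    set B := β * b0 * ((j:ℝ)+1) with hB
    have hj : (0:ℝ) < (j:ℝ)+1 := by positivity
    have hAB : A - B = (ν - b0) * β * ((j:ℝ)+1) := by rw [hA, hB]; ring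
    have h1 : (A - B) * Real.exp B + Real.exp B ≤ Real.exp A := by
      have h2 := Real.add_one_le_exp (A - B)
      have h3 : Real.exp (A - B) * Real.exp B = Real.exp A := by
        rw [← Real.exp_add]; ring_nf
      nlinarith [Real.exp_pos B]
    rw [div_mul_eq_mul_div, div_mul_eq_mul_div, ← sub_div, le_div_iff₀ hj]
    have h4 : (A - B) * Real.exp B * a j ≤ (Real.exp A - Real.exp B) * a j :=
      mul_le_mul_of_nonneg_right (by linarith) (hapos j).le
    calc (ν - b0) * β * (Real.exp B * a j) * ((j:ℝ)+1)
        = (A - B) * Real.exp B * a j := by rw [hAB]; ring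
      _ ≤ (Real.exp A - Real.exp B) * a j := h4
      _ = Real.exp A * a j - Real.exp B * a j := by ring
  subst hρdef hMdef hρc
  have hMnonneg : ∀ ν : ℝ,
      0 ≤ ∑' j : ℕ, (Real.exp (β * ν * ((j:ℝ)+1)) / ((j:ℝ)+1)) * a j := by
    intro ν
    apply tsum_nonneg
    intro j
    have hj : (0:ℝ) < (j:ℝ)+1 := by positivity
    exact mul_nonneg (div_nonneg (Real.exp_pos _).le hj.le) (hapos j).le
  constructor
  · intro x hx hxc
    obtain ⟨hb0, hbρ⟩ := hb x hx hxc
    have hbρ' : β * (∑' j : ℕ, Real.exp (β * (b x) * ((j:ℝ)+1)) * a j) = x := hbρ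
    have hub : ∀ t : Set.Iic (-μ),
        (t:ℝ) * x - ((∑' j : ℕ, (Real.exp (β * (μ + (t:ℝ)) * ((j:ℝ)+1)) / ((j:ℝ)+1)) * a j)
            - ∑' j : ℕ, (Real.exp (β * μ * ((j:ℝ)+1)) / ((j:ℝ)+1)) * a j)
          ≤ x * (b x - μ) - (∑' j : ℕ, (Real.exp (β * (b x) * ((j:ℝ)+1)) / ((j:ℝ)+1)) * a j)
            + ∑' j : ℕ, (Real.exp (β * μ * ((j:ℝ)+1)) / ((j:ℝ)+1)) * a j := by
      rintro ⟨t, ht⟩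
      simp only [Set.mem_Iic] at ht
      have hν : μ + t ≤ 0 := by linarith
      have hk := key (μ + t) (b x) hν hb0
      rw [hbρ'] at hk
      nlinarith [hk]
    have hbdd : BddAbove (Set.range fun t : Set.Iic (-μ) =>
        (t:ℝ) * x - ((∑' j : ℕ, (Real.exp (β * (μ + (t:ℝ)) * ((j:ℝ)+1)) / ((j:ℝ)+1)) * a j)
            - ∑' j : ℕ, (Real.exp (β * μ * ((j:ℝ)+1)) / ((j:ℝ)+1)) * a j)) := by
      refine ⟨x * (b x - μ) - (∑' j : ℕ, (Real.exp (β * (b x) * ((j:ℝ)+1)) / ((j:ℝ)+1)) * a j)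
        + ∑' j : ℕ, (Real.exp (β * μ * ((j:ℝ)+1)) / ((j:ℝ)+1)) * a j, ?_⟩
      rintro _ ⟨t, rfl⟩
      exact hub t
    apply le_antisymm _ (ciSup_le hub)
    have hmem : b x - μ ∈ Set.Iic (-μ) := by simp only [Set.mem_Iic]; linarith
    have hval := le_ciSup hbdd (⟨b x - μ, hmem⟩ : Set.Iic (-μ))
    have heq : μ + (b x - μ) = b x := by ring
    rw [heq] at hval
    calc x * (b x - μ) - (∑' j : ℕ, (Real.exp (β * (b x) * ((j:ℝ)+1)) / ((j:ℝ)+1)) * a j)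
          + ∑' j : ℕ, (Real.exp (β * μ * ((j:ℝ)+1)) / ((j:ℝ)+1)) * a j
        = (b x - μ) * x - ((∑' j : ℕ, (Real.exp (β * (b x) * ((j:ℝ)+1)) / ((j:ℝ)+1)) * a j)
            - ∑' j : ℕ, (Real.exp (β * μ * ((j:ℝ)+1)) / ((j:ℝ)+1)) * a j) := by ring
      _ ≤ _ := hval
  · -- second part
    have hub : ∀ t : Set.Iic (-μ),
        0 - ((∑' j : ℕ, (Real.exp (β * (μ + (t:ℝ)) * ((j:ℝ)+1)) / ((j:ℝ)+1)) * a j)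
            - ∑' j : ℕ, (Real.exp (β * μ * ((j:ℝ)+1)) / ((j:ℝ)+1)) * a j)
          ≤ ∑' j : ℕ, (Real.exp (β * μ * ((j:ℝ)+1)) / ((j:ℝ)+1)) * a j := by
      rintro ⟨t, ht⟩
      have := hMnonneg (μ + t)
      linarith
    have hbdd : BddAbove (Set.range fun t : Set.Iic (-μ) =>
        0 - ((∑' j : ℕ, (Real.exp (β * (μ + (t:ℝ)) * ((j:ℝ)+1)) / ((j:ℝ)+1)) * a j)
            - ∑' j : ℕ, (Real.exp (β * μ * ((j:ℝ)+1)) / ((j:ℝ)+1)) * a j)) := by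
      refine ⟨∑' j : ℕ, (Real.exp (β * μ * ((j:ℝ)+1)) / ((j:ℝ)+1)) * a j, ?_⟩
      rintro _ ⟨t, rfl⟩
      exact hub t
    apply le_antisymm _ (ciSup_le hub)
    -- decay bound
    have hdecay : ∀ n : ℕ,
        (∑' j : ℕ, (Real.exp (β * (μ + -(n:ℝ)) * ((j:ℝ)+1)) / ((j:ℝ)+1)) * a j)
          ≤ Real.exp (-β) ^ n *
            ∑' j : ℕ, (Real.exp (β * μ * ((j:ℝ)+1)) / ((j:ℝ)+1)) * a j := by
      intro n
      rw [← tsum_mul_left]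
      have hνn : μ + -(n:ℝ) ≤ 0 := by
        have : (0:ℝ) ≤ (n:ℝ) := Nat.cast_nonneg n
        linarith
      apply Summable.tsum_le_tsum _ (hS2 _ hνn) ((hS2 μ hμ.le).mul_left _)
      intro j
      have hj : (0:ℝ) < (j:ℝ)+1 := by positivity
      have hexp : Real.exp (β * (μ + -(n:ℝ)) * ((j:ℝ)+1))
          ≤ Real.exp (-β) ^ n * Real.exp (β * μ * ((j:ℝ)+1)) := by
        rw [← Real.exp_nat_mul, ← Real.exp_add]
        apply Real.exp_le_exp.mpr
        have hn : (0:ℝ) ≤ (n:ℝ) := Nat.cast_nonneg n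
        nlinarith [mul_nonneg (mul_nonneg hβ.le hn) (Nat.cast_nonneg (α := ℝ) j)]
      calc Real.exp (β * (μ + -(n:ℝ)) * ((j:ℝ)+1)) / ((j:ℝ)+1) * a j
          ≤ (Real.exp (-β) ^ n * Real.exp (β * μ * ((j:ℝ)+1))) / ((j:ℝ)+1) * a j := by
            apply mul_le_mul_of_nonneg_right _ (hapos j).le
            exact (div_le_div_iff_of_pos_right hj).mpr hexp
        _ = Real.exp (-β) ^ n * (Real.exp (β * μ * ((j:ℝ)+1)) / ((j:ℝ)+1) * a j) := by ring
    have htend0 : Tendsto (fun n : ℕ =>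
        ∑' j : ℕ, (Real.exp (β * (μ + -(n:ℝ)) * ((j:ℝ)+1)) / ((j:ℝ)+1)) * a j)
        atTop (nhds 0) := by
      apply squeeze_zero (fun n => hMnonneg _) hdecay
      have h1 : Tendsto (fun n : ℕ => Real.exp (-β) ^ n) atTop (nhds 0) := by
        apply tendsto_pow_atTop_nhds_zero_of_lt_one (Real.exp_pos _).le
        exact Real.exp_lt_one_iff.mpr (by linarith)
      simpa using h1.mul_const _
    have htend : Tendsto (fun n : ℕ =>
        0 - ((∑' j : ℕ, (Real.exp (β * (μ + -(n:ℝ)) * ((j:ℝ)+1)) / ((j:ℝ)+1)) * a j)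
          - ∑' j : ℕ, (Real.exp (β * μ * ((j:ℝ)+1)) / ((j:ℝ)+1)) * a j)) atTop
        (nhds (∑' j : ℕ, (Real.exp (β * μ * ((j:ℝ)+1)) / ((j:ℝ)+1)) * a j)) := by
      have h2 := htend0.sub_const (∑' j : ℕ, (Real.exp (β * μ * ((j:ℝ)+1)) / ((j:ℝ)+1)) * a j)
      have h3 := h2.const_sub (0:ℝ)
      simpa using h3
    apply le_of_tendsto htend
    filter_upwards with n
    have hmem : -(n:ℝ) ∈ Set.Iic (-μ) := by
      simp only [Set.mem_Iic]
      have : (0:ℝ) ≤ (n:ℝ) := Nat.cast_nonneg n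
      linarith
    exact le_ciSup hbdd (⟨-(n:ℝ), hmem⟩ : Set.Iic (-μ))
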